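/- Every half-isomorphism φ : G → G' of groups is a semi-isomorphism; that is, φ(1) = 1 and φ(xyx) = φ(x)φ(y)φ(x) for all x, y ∈ G. -/
import Mathlib

private lemma key_half {H : Type*} [Group H] (a b c d e : H)
    (hc : c = a * b ∨ c = b * a)
    (hd : d = b * a ∨ d = a * b)
    (h1 : e = c * a ∨ e = a * c)
    (h2 : e = a * d ∨ e = d * a)
    (h3 : c * c = e * b ∨ c * c = b * e)
    (h4 : d * d = b * e ∨ d * d = e * b) :
    e = a * b * a := by
  rcases hc with rfl | rfl
  · -- c = a*b
    rcases h1 with h1 | h1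
    · exact h1
    · -- h1 : e = a*(a*b)
      rcases hd with rfl | rfl
      · -- d = b*a
        rcases h2 with h2 | h2
        · exact h2.trans (mul_assoc a b a).symm
        · -- h2 : e = (b*a)*a
          rcases h4 with h4 | h4
          · rw [h2] at h4
            have h' : b * (a * (b * a)) = b * (b * (a * a)) := by
              simpa [mul_assoc] using h4
            have h'' := mul_left_cancel h'
            have hcomm : a * b = b * a :=
              mul_right_cancel (show (a*b)*a = (b*a)*a by simpa [mul_assoc] using h'')
            rw [h2, ← hcomm]
          · rw [h2] at h4
            have h' : b * (a * (b * a)) = b * (a * (a * b)) := by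
              simpa [mul_assoc] using h4
            have hcomm : b * a = a * b := mul_left_cancel (mul_left_cancel h')
            rw [h2, hcomm]
      · -- d = a*b
        rcases h2 with h2 | h2
        · -- h2 : e = a*(a*b), same as h1; use h3
          rcases h3 with h3 | h3
          · rw [h1] at h3
            have h' : a * (b * (a * b)) = a * (a * (b * b)) := by
              simpa [mul_assoc] using h3
            have h'' := mul_left_cancel h'
            have hcomm : b * a = a * b :=
              mul_right_cancel (show (b*a)*b = (a*b)*b by simpa [mul_assoc] using h'')
            rw [h1, mul_assoc, ← hcomm]
          · rw [h1] at h3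
            have h' : ((a*b)*a)*b = ((b*a)*a)*b := by simpa [mul_assoc] using h3
            have hcomm : a * b = b * a := mul_right_cancel (mul_right_cancel h')
            rw [h1, mul_assoc, hcomm]
        · exact h2
  · -- c = b*a
    rcases h1 with h1 | h1
    · -- h1 : e = (b*a)*a
      rcases h3 with h3 | h3
      · rw [h1] at h3
        have h' : b * (a * (b * a)) = b * (a * (a * b)) := by
          simpa [mul_assoc] using h3
        have hcomm : b * a = a * b := mul_left_cancel (mul_left_cancel h')
        rw [h1, hcomm]
      · rw [h1] at h3
        have h' : b * (a * (b * a)) = b * (b * (a * a)) := by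
          simpa [mul_assoc] using h3
        have h'' := mul_left_cancel h'
        have hcomm : a * b = b * a :=
          mul_right_cancel (show (a*b)*a = (b*a)*a by simpa [mul_assoc] using h'')
        rw [h1, ← hcomm]
    · exact h1.trans (mul_assoc a b a).symm

theorem stmt_7 {G G' : Type*} [Group G] [Group G'] (φ : G → G')
    (hbij : Function.Bijective φ)
    (hhalf : ∀ x y : G, φ (x * y) = φ x * φ y ∨ φ (x * y) = φ y * φ x) :
    φ 1 = 1 ∧ ∀ x y : G, φ (x * y * x) = φ x * φ y * φ x := by
  have hone : φ 1 = 1 := by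
    rcases hhalf 1 1 with h | h <;>
    · rw [mul_one] at h
      exact (mul_left_cancel (a := φ 1) (by rw [mul_one, ← h])).symm
  refine ⟨hone, fun x y => ?_⟩
  set a := φ x
  set b := φ y
  set c := φ (x * y) with hc_def
  set d := φ (y * x) with hd_def
  set e := φ (x * y * x) with he_def
  have hc : c = a * b ∨ c = b * a := hhalf x y
  have hd : d = b * a ∨ d = a * b := hhalf y x
  have h1 : e = c * a ∨ e = a * c := hhalf (x * y) x
  have h2 : e = a * d ∨ e = d * a := by
    have := hhalf x (y * x)
    rwa [← mul_assoc] at this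
  have hcc : φ ((x * y) * (x * y)) = c * c := by
    rcases hhalf (x * y) (x * y) with h | h <;> exact h
  have hdd : φ ((y * x) * (y * x)) = d * d := by
    rcases hhalf (y * x) (y * x) with h | h <;> exact h
  have h3 : c * c = e * b ∨ c * c = b * e := by
    have := hhalf (x * y * x) y
    rw [show (x * y * x) * y = (x * y) * (x * y) by group, hcc] at this
    exact this
  have h4 : d * d = b * e ∨ d * d = e * b := by
    have := hhalf y (x * y * x)
    rw [show y * (x * y * x) = (y * x) * (y * x) by group, hdd] at this
    exact this
  exact key_half a b c d e hc hd h1 h2 h3 h4
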